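/- The Cayley transform z ↦ (z - iI)(z + iI)⁻¹ maps the Siegel upper half-space ℍ₂ = {z ∈ M(2,ℂ) : z = zᵗ, Im z positive definite} bijectively onto the open generalized unit ball {w ∈ M(2,ℂ) : w = wᵗ, I - w w* positive definite}. -/

import Mathlib

open Matrix Complex
open scoped ComplexOrder

variable {n : Type*} [Fintype n] [DecidableEq n]

lemma posDef_conj_mul {P B : Matrix n n ℂ} (hP : P.PosDef) (hB : IsUnit B) :
    (B * P * Bᴴ).PosDef := by
  refine Matrix.PosDef.of_dotProduct_mulVec_pos (Matrix.isHermitian_mul_mul_conjTranspose B hP.1) fun x hx => ?_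
  have hBH : IsUnit Bᴴ := (Matrix.isUnit_conjTranspose B).2 hB
  have hBx : Bᴴ *ᵥ x ≠ 0 :=
    ((Matrix.mulVec_injective_iff_isUnit.mpr hBH).ne_iff' (Matrix.mulVec_zero Bᴴ)).2 hx
  have := hP.dotProduct_mulVec_pos hBx
  simpa only [star_mulVec, conjTranspose_conjTranspose, dotProduct_mulVec, vecMul_vecMul,
    Matrix.mul_assoc] using this

lemma posDef_map_of_posDef {Y : Matrix (Fin 2) (Fin 2) ℝ} (hY : Y.PosDef) :
    (Y.map (fun r : ℝ => (r : ℂ))).PosDef := by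
  have hsym : Y 1 0 = Y 0 1 := by
    have := congrFun (congrFun hY.1 1) 0; simpa using this.symm
  refine Matrix.PosDef.of_dotProduct_mulVec_pos (hY.1.map _ (fun r => by simp)) fun v hv => ?_
  set a : Fin 2 → ℝ := fun i => (v i).re with ha
  set b : Fin 2 → ℝ := fun i => (v i).im with hb
  have key : star v ⬝ᵥ (Y.map (fun r : ℝ => (r : ℂ))) *ᵥ v
      = ((a ⬝ᵥ Y *ᵥ a + b ⬝ᵥ Y *ᵥ b : ℝ) : ℂ) := by
    simp only [dotProduct, mulVec, Fin.sum_univ_two, Pi.star_apply, map_apply, a, b]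
    simp [Complex.ext_iff, hsym]
    constructor <;> ring
  rw [key]
  have hpos : 0 < a ⬝ᵥ Y *ᵥ a + b ⬝ᵥ Y *ᵥ b := by
    have h0 : a ≠ 0 ∨ b ≠ 0 := by
      by_contra h
      push_neg at h
      apply hv
      funext i
      have h1 := congrFun h.1 i
      have h2 := congrFun h.2 i
      simp only [a, b, Pi.zero_apply] at h1 h2
      exact Complex.ext h1 h2
    have hsa : ∀ x : Fin 2 → ℝ, 0 ≤ x ⬝ᵥ Y *ᵥ x := fun x => by
      simpa using hY.posSemidef.dotProduct_mulVec_nonneg x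
    rcases h0 with h | h
    · exact add_pos_of_pos_of_nonneg (by simpa using hY.dotProduct_mulVec_pos h) (hsa b)
    · exact add_pos_of_nonneg_of_pos (hsa a) (by simpa using hY.dotProduct_mulVec_pos h)
  exact_mod_cast Complex.zero_lt_real.mpr hpos

lemma posDef_of_posDef_map {Y : Matrix (Fin 2) (Fin 2) ℝ}
    (h : (Y.map (fun r : ℝ => (r : ℂ))).PosDef) : Y.PosDef := by
  refine Matrix.PosDef.of_dotProduct_mulVec_pos ?_ ?_
  · have := h.1
    ext i j
    have := congrFun (congrFun this i) j
    simp only [conjTranspose_apply, map_apply, star, Complex.ext_iff] at this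
    simpa using this.1
  · intro x hx
    have hv : (fun i => (x i : ℂ)) ≠ 0 := by
      intro hc
      apply hx
      ext i
      have := congrFun hc i
      simpa using this
    have := h.dotProduct_mulVec_pos hv
    have key : star (fun i => (x i : ℂ)) ⬝ᵥ (Y.map (fun r : ℝ => (r : ℂ))) *ᵥ (fun i => (x i : ℂ))
        = ((x ⬝ᵥ Y *ᵥ x : ℝ) : ℂ) := by
      simp only [dotProduct, mulVec, Fin.sum_univ_two, Pi.star_apply, map_apply]
      push_cast
      simp [Complex.ext_iff]
    rw [key] at this
    exact_mod_cast this

abbrev ImC (z : Matrix (Fin 2) (Fin 2) ℂ) : Matrix (Fin 2) (Fin 2) ℂ :=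
  (Matrix.of fun i j => (z i j).im : Matrix (Fin 2) (Fin 2) ℝ).map (fun r : ℝ => (r : ℂ))

lemma sub_conjTranspose_eq (z : Matrix (Fin 2) (Fin 2) ℂ) (hz : zᵀ = z) :
    z - zᴴ = (2 * Complex.I) • ImC z := by
  ext i j
  have hij : z j i = z i j := by
    conv_lhs => rw [← hz]
    rfl
  simp only [Matrix.sub_apply, conjTranspose_apply, Matrix.smul_apply, map_apply, of_apply, smul_eq_mul]
  rw [hij]
  have := Complex.sub_conj (z i j)
  rw [Complex.star_def, this]
  push_cast
  ring

lemma aux_isUnit (z : Matrix (Fin 2) (Fin 2) ℂ) (hz : zᵀ = z)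
    (hY : (Matrix.of fun i j => (z i j).im : Matrix (Fin 2) (Fin 2) ℝ).PosDef) :
    IsUnit (z + Complex.I • (1 : Matrix (Fin 2) (Fin 2) ℂ)) := by
  set A := z + Complex.I • (1 : Matrix (Fin 2) (Fin 2) ℂ) with hAdef
  have hYc : (ImC z).PosDef := posDef_map_of_posDef hY
  have h3 : ImC z + ImC z = (-Complex.I) • (z - zᴴ) := by
    rw [sub_conjTranspose_eq z hz, smul_smul,
      show (-Complex.I) * (2 * Complex.I) = 2 by
        simp [mul_comm, mul_assoc, Complex.I_mul_I]; ring_nf; simp [Complex.I_sq]]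
    exact (two_smul ℂ _).symm
  have key : Aᴴ * A = zᴴ * z + (1 + (ImC z + ImC z)) := by
    rw [h3]
    simp only [hAdef, conjTranspose_add, conjTranspose_smul, conjTranspose_one,
      Complex.star_def, Complex.conj_I]
    simp only [add_mul, mul_add, smul_add, smul_mul_assoc, mul_smul_comm, one_mul, mul_one,
      smul_smul, smul_sub, neg_mul, mul_neg, Complex.I_mul_I, neg_neg, one_smul, neg_smul]
    abel_nf
    simp [smul_smul, Complex.I_mul_I]
  have hPD : (Aᴴ * A).PosDef := by
    rw [key]
    exact Matrix.PosDef.posSemidef_add (Matrix.posSemidef_conjTranspose_mul_self z)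
      (Matrix.PosDef.one.add (hYc.add hYc))
  have hdetpos := hPD.det_pos
  rw [Matrix.det_mul, Matrix.det_conjTranspose] at hdetpos
  have hdet : A.det ≠ 0 := by
    intro h
    rw [h] at hdetpos
    simp at hdetpos
  exact (Matrix.isUnit_iff_isUnit_det A).2 hdet.isUnit

/-- The Siegel upper half-space of symmetric 2×2 complex matrices with
positive definite imaginary part. -/
def SiegelH2 : Set (Matrix (Fin 2) (Fin 2) ℂ) :=
  {z | zᵀ = z ∧ (Matrix.of fun i j => (z i j).im : Matrix (Fin 2) (Fin 2) ℝ).PosDef}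

/-- The open generalized unit ball of symmetric 2×2 complex matrices. -/
def GenBall : Set (Matrix (Fin 2) (Fin 2) ℂ) :=
  {w | wᵀ = w ∧ (1 - w * wᴴ).PosDef}

lemma cayley_formula (z : Matrix (Fin 2) (Fin 2) ℂ)
    (hU : IsUnit (z + Complex.I • (1 : Matrix (Fin 2) (Fin 2) ℂ))) :
    (z - Complex.I • 1) * (z + Complex.I • 1)⁻¹
      = 1 - (2 * Complex.I) • (z + Complex.I • 1)⁻¹ := by
  have h1 : z - Complex.I • (1 : Matrix (Fin 2) (Fin 2) ℂ)
      = (z + Complex.I • 1) - (2 * Complex.I) • 1 := by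
    rw [two_mul, add_smul]; abel
  rw [h1, sub_mul, Matrix.mul_nonsing_inv _ ((Matrix.isUnit_iff_isUnit_det _).1 hU),
    smul_mul_assoc, one_mul]

lemma cayley_mem (z : Matrix (Fin 2) (Fin 2) ℂ) (hz1 : zᵀ = z)
    (hY : (Matrix.of fun i j => (z i j).im : Matrix (Fin 2) (Fin 2) ℝ).PosDef) :
    ((z - Complex.I • 1) * (z + Complex.I • 1)⁻¹) ∈ GenBall := by
  obtain ⟨A, hAdef⟩ : ∃ A, A = z + Complex.I • (1 : Matrix (Fin 2) (Fin 2) ℂ) := ⟨_, rfl⟩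
  obtain ⟨B, hBdef⟩ : ∃ B, B = z - Complex.I • (1 : Matrix (Fin 2) (Fin 2) ℂ) := ⟨_, rfl⟩
  rw [show z - Complex.I • (1 : Matrix (Fin 2) (Fin 2) ℂ) = B from hBdef.symm,
      show z + Complex.I • (1 : Matrix (Fin 2) (Fin 2) ℂ) = A from hAdef.symm]
  have hU : IsUnit A := hAdef ▸ aux_isUnit z hz1 hY
  have hUdet : IsUnit A.det := (Matrix.isUnit_iff_isUnit_det _).1 hU
  have hUH : IsUnit Aᴴ := (Matrix.isUnit_conjTranspose A).2 hU
  have hUHdet : IsUnit Aᴴ.det := (Matrix.isUnit_iff_isUnit_det _).1 hUH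
  have hYc := posDef_map_of_posDef hY
  have hAT : Aᵀ = A := by rw [hAdef, transpose_add, hz1, transpose_smul, transpose_one]
  have hBT : Bᵀ = B := by rw [hBdef, transpose_sub, hz1, transpose_smul, transpose_one]
  have hAAinv : A * A⁻¹ = 1 := Matrix.mul_nonsing_inv _ hUdet
  have hAinvA : A⁻¹ * A = 1 := Matrix.nonsing_inv_mul _ hUdet
  have hcomm : B * A = A * B := by
    rw [hAdef, hBdef]
    simp only [mul_add, add_mul, sub_mul, mul_sub, smul_mul_assoc, mul_smul_comm,
      one_mul, mul_one]
    module
  have hcomm' : B * A⁻¹ = A⁻¹ * B := by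
    have h := congrArg (fun M => A⁻¹ * M * A⁻¹) hcomm
    simp only [Matrix.mul_assoc] at h
    rw [hAAinv, Matrix.mul_one] at h
    rw [← Matrix.mul_assoc A⁻¹ A, hAinvA, one_mul] at h
    exact h.symm
  constructor
  · show (B * A⁻¹)ᵀ = B * A⁻¹
    rw [transpose_mul, Matrix.transpose_nonsing_inv, hAT, hBT, ← hcomm']
  · show (1 - (B * A⁻¹) * (B * A⁻¹)ᴴ).PosDef
    have e1 : A⁻¹ * (A * Aᴴ) * (A⁻¹)ᴴ = 1 := by
      rw [Matrix.conjTranspose_nonsing_inv, ← Matrix.mul_assoc A⁻¹ A Aᴴ, hAinvA, one_mul,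
        Matrix.mul_nonsing_inv _ hUHdet]
    have e2 : A⁻¹ * (B * Bᴴ) * (A⁻¹)ᴴ = (B * A⁻¹) * (B * A⁻¹)ᴴ := by
      rw [hcomm', conjTranspose_mul]
      simp only [Matrix.mul_assoc]
    have key2 : 1 - (B * A⁻¹) * (B * A⁻¹)ᴴ = A⁻¹ * (A * Aᴴ - B * Bᴴ) * (A⁻¹)ᴴ := by
      rw [Matrix.mul_sub, Matrix.sub_mul, e1, e2]
    have key3 : A * Aᴴ - B * Bᴴ = (4 : ℂ) • ImC z := by
      have h2 : z - zᴴ = (2 * Complex.I) • ImC z := sub_conjTranspose_eq z hz1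
      have hstep : A * Aᴴ - B * Bᴴ = (-(2 * Complex.I)) • (z - zᴴ) := by
        rw [hAdef, hBdef]
        simp only [conjTranspose_add, conjTranspose_sub, conjTranspose_smul,
          conjTranspose_one, Complex.star_def, Complex.conj_I]
        simp only [mul_add, add_mul, sub_mul, mul_sub, smul_mul_assoc, mul_smul_comm,
          one_mul, mul_one]
        module
      rw [hstep, h2, smul_smul]
      congr 1
      simp [Complex.ext_iff]
      norm_num
    have h4 : ((4 : ℂ) • ImC z).PosDef := by
      rw [show (4 : ℂ) = 1 + 1 + 1 + 1 by norm_num, add_smul, add_smul, add_smul, one_smul]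
      exact ((hYc.add hYc).add hYc).add hYc
    rw [key2, key3]
    exact posDef_conj_mul h4 (Matrix.isUnit_nonsing_inv_iff.2 hU)

lemma commute_inv {A B : Matrix (Fin 2) (Fin 2) ℂ} (hdet : IsUnit A.det)
    (h : B * A = A * B) : B * A⁻¹ = A⁻¹ * B := by
  have hh := congrArg (fun M => A⁻¹ * M * A⁻¹) h
  simp only [Matrix.mul_assoc] at hh
  rw [Matrix.mul_nonsing_inv _ hdet, Matrix.mul_one] at hh
  rw [← Matrix.mul_assoc A⁻¹ A, Matrix.nonsing_inv_mul _ hdet, one_mul] at hh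
  exact hh.symm

lemma sandwich {A C : Matrix (Fin 2) (Fin 2) ℂ} (hA : IsUnit A.det) (hC : IsUnit C.det)
    (X : Matrix (Fin 2) (Fin 2) ℂ) : A⁻¹ * (A * X * C) * C⁻¹ = X := by
  calc A⁻¹ * (A * X * C) * C⁻¹ = (A⁻¹ * A) * X * (C * C⁻¹) := by
        simp only [Matrix.mul_assoc]
  _ = X := by rw [Matrix.nonsing_inv_mul _ hA, Matrix.mul_nonsing_inv _ hC, one_mul,
        Matrix.mul_one]

lemma cayley_inj : Set.InjOn (fun z : Matrix (Fin 2) (Fin 2) ℂ =>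
      (z - Complex.I • (1 : Matrix (Fin 2) (Fin 2) ℂ)) *
        (z + Complex.I • (1 : Matrix (Fin 2) (Fin 2) ℂ))⁻¹) SiegelH2 := by
  intro z1 h1 z2 h2 heq
  have hU1 : IsUnit (z1 + Complex.I • 1) := aux_isUnit z1 h1.1 h1.2
  have hU2 : IsUnit (z2 + Complex.I • 1) := aux_isUnit z2 h2.1 h2.2
  simp only [cayley_formula z1 hU1, cayley_formula z2 hU2] at heq
  have heq2 : (2 * Complex.I) • (z1 + Complex.I • (1:Matrix (Fin 2) (Fin 2) ℂ))⁻¹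
      = (2 * Complex.I) • (z2 + Complex.I • (1:Matrix (Fin 2) (Fin 2) ℂ))⁻¹ := by
    have := sub_right_injective heq
    exact this
  have hIne : (2 * Complex.I) ≠ 0 := by simp [Complex.I_ne_zero]
  have heq3 := smul_right_injective (Matrix (Fin 2) (Fin 2) ℂ) hIne heq2
  have heq4 : z1 + Complex.I • (1:Matrix (Fin 2) (Fin 2) ℂ)
      = z2 + Complex.I • (1:Matrix (Fin 2) (Fin 2) ℂ) := by
    rw [← Matrix.nonsing_inv_nonsing_inv _ ((Matrix.isUnit_iff_isUnit_det _).1 hU1), heq3,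
      Matrix.nonsing_inv_nonsing_inv _ ((Matrix.isUnit_iff_isUnit_det _).1 hU2)]
  exact add_right_cancel heq4

lemma cayley_surj {w : Matrix (Fin 2) (Fin 2) ℂ} (hw : w ∈ GenBall) :
    ∃ z ∈ SiegelH2,
      (z - Complex.I • (1 : Matrix (Fin 2) (Fin 2) ℂ)) *
        (z + Complex.I • (1 : Matrix (Fin 2) (Fin 2) ℂ))⁻¹ = w := by
  obtain ⟨hwT, hwP⟩ := hw
  have hwHT : (wᴴ)ᵀ = wᴴ := by
    ext i j
    have hji : w j i = w i j := by
      conv_lhs => rw [← hwT]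
      rfl
    simp [conjTranspose_apply, hji]
  have hP2 : (1 - wᴴ * w).PosDef := by
    have h := hwP.transpose
    rwa [transpose_sub, transpose_one, transpose_mul, hwHT, hwT] at h
  -- 1 - w is invertible
  have hUw : IsUnit (1 - w).det := by
    rw [isUnit_iff_ne_zero]
    intro hdet
    obtain ⟨v, hv0, hveq⟩ := (Matrix.exists_mulVec_eq_zero_iff).2 hdet
    rw [Matrix.sub_mulVec, Matrix.one_mulVec, sub_eq_zero] at hveq
    have hpos := hP2.dotProduct_mulVec_pos hv0
    rw [Matrix.sub_mulVec, Matrix.one_mulVec, dotProduct_sub, ← Matrix.mulVec_mulVec,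
      Matrix.dotProduct_mulVec (star v) wᴴ, ← star_mulVec] at hpos
    rw [← hveq] at hpos
    simp at hpos
  have hUwH : IsUnit (1 - wᴴ).det := by
    have : (1 - w)ᴴ = 1 - wᴴ := by rw [conjTranspose_sub, conjTranspose_one]
    rw [← this, Matrix.det_conjTranspose]
    exact hUw.star
  set z := Complex.I • ((1 + w) * (1 - w)⁻¹) with hzdef
  have hcw : (1 + w) * (1 - w) = (1 - w) * (1 + w) := by
    simp only [mul_add, add_mul, sub_mul, mul_sub, one_mul, mul_one]
    abel
  have hcw' : (1 + w) * (1 - w)⁻¹ = (1 - w)⁻¹ * (1 + w) := commute_inv hUw hcw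
  -- transpose symmetry of z
  have hzT : zᵀ = z := by
    rw [hzdef, transpose_smul, transpose_mul, Matrix.transpose_nonsing_inv,
      transpose_sub, transpose_add, transpose_one, hwT, ← hcw']
  -- z(1-w) = I•(1+w)
  have hz1w : z * (1 - w) = Complex.I • (1 + w) := by
    rw [hzdef, smul_mul_assoc, Matrix.mul_assoc, Matrix.nonsing_inv_mul _ hUw,
      Matrix.mul_one]
  -- middle identity
  have hmid : (1 - wᴴ) * (z - zᴴ) * (1 - w) = (2 * Complex.I) • (1 - wᴴ * w) := by
    have e1 : (1 - wᴴ) * z * (1 - w) = Complex.I • ((1 - wᴴ) * (1 + w)) := by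
      rw [Matrix.mul_assoc, hz1w, mul_smul_comm]
    have e2 : (1 - wᴴ) * zᴴ = (-Complex.I) • (1 + wᴴ) := by
      have : (1 - wᴴ) * zᴴ = (z * (1 - w))ᴴ := by
        rw [conjTranspose_mul, conjTranspose_sub, conjTranspose_one]
      rw [this, hz1w, conjTranspose_smul, conjTranspose_add, conjTranspose_one,
        Complex.star_def, Complex.conj_I, neg_smul]
    calc (1 - wᴴ) * (z - zᴴ) * (1 - w)
        = (1 - wᴴ) * z * (1 - w) - ((1 - wᴴ) * zᴴ) * (1 - w) := by
          rw [Matrix.mul_sub (1 - wᴴ) z zᴴ, Matrix.sub_mul]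
    _ = Complex.I • ((1 - wᴴ) * (1 + w)) - (-Complex.I) • ((1 + wᴴ) * (1 - w)) := by
          rw [e1, e2, smul_mul_assoc]
    _ = (2 * Complex.I) • (1 - wᴴ * w) := by
          simp only [mul_add, add_mul, sub_mul, mul_sub, one_mul, mul_one, smul_add,
            smul_sub, neg_smul, sub_neg_eq_add]
          module
  have hsand : z - zᴴ = (2 * Complex.I) • ((1 - wᴴ)⁻¹ * (1 - wᴴ * w) * (1 - w)⁻¹) := by
    have := congrArg (fun M => (1 - wᴴ)⁻¹ * M * (1 - w)⁻¹) hmid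
    rw [sandwich hUwH hUw] at this
    rw [this, mul_smul_comm, smul_mul_assoc]
  have h2I : (2 * Complex.I) ≠ 0 := by simp [Complex.I_ne_zero]
  have hQ : (ImC z).PosDef := by
    have hinv : (1 - w)⁻¹ = ((1 - wᴴ)⁻¹)ᴴ := by
      rw [Matrix.conjTranspose_nonsing_inv, conjTranspose_sub, conjTranspose_one,
        conjTranspose_conjTranspose]
    have hsand2 := sub_conjTranspose_eq z hzT
    have heq : (2 * Complex.I) • ImC z
        = (2 * Complex.I) • ((1 - wᴴ)⁻¹ * (1 - wᴴ * w) * (1 - w)⁻¹) := by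
      rw [← hsand2, hsand]
    have hEq := smul_right_injective (Matrix (Fin 2) (Fin 2) ℂ) h2I heq
    rw [hEq, hinv]
    exact posDef_conj_mul hP2
      (Matrix.isUnit_nonsing_inv_iff.2 ((Matrix.isUnit_iff_isUnit_det _).2 hUwH))
  refine ⟨z, ⟨hzT, posDef_of_posDef_map hQ⟩, ?_⟩
  have h1 : (1 : Matrix (Fin 2) (Fin 2) ℂ) = (1 - w) * (1 - w)⁻¹ :=
    (Matrix.mul_nonsing_inv _ hUw).symm
  have hzadd : z + Complex.I • 1 = (2 * Complex.I) • (1 - w)⁻¹ := by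
    calc z + Complex.I • (1 : Matrix (Fin 2) (Fin 2) ℂ)
        = Complex.I • ((1 + w) * (1 - w)⁻¹) + Complex.I • ((1 - w) * (1 - w)⁻¹) := by
          rw [hzdef, ← h1]
    _ = Complex.I • ((1 + w + (1 - w)) * (1 - w)⁻¹) := by rw [← smul_add, ← add_mul]
    _ = (2 * Complex.I) • (1 - w)⁻¹ := by
        have h2 : (1 + w) + (1 - w) = (2 : ℂ) • (1 : Matrix (Fin 2) (Fin 2) ℂ) := by module
        rw [h2, smul_mul_assoc, one_mul, smul_smul, mul_comm Complex.I 2]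
  have hUz : IsUnit (z + Complex.I • (1 : Matrix (Fin 2) (Fin 2) ℂ)) := by
    rw [hzadd]
    refine (Matrix.isUnit_iff_isUnit_det _).2 (Matrix.isUnit_det_of_right_inverse (B := (2 * Complex.I)⁻¹ • (1 - w)) ?_)
    rw [smul_mul_assoc, mul_smul_comm, smul_smul, Matrix.nonsing_inv_mul _ hUw,
      mul_inv_cancel₀ h2I, one_smul]
  have hzsub : z - Complex.I • 1 = w * (z + Complex.I • 1) := by
    rw [hzadd, mul_smul_comm]
    calc z - Complex.I • (1 : Matrix (Fin 2) (Fin 2) ℂ)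
        = Complex.I • ((1 + w) * (1 - w)⁻¹) - Complex.I • ((1 - w) * (1 - w)⁻¹) := by
          rw [hzdef, ← h1]
    _ = Complex.I • ((1 + w - (1 - w)) * (1 - w)⁻¹) := by rw [← smul_sub, ← sub_mul]
    _ = (2 * Complex.I) • (w * (1 - w)⁻¹) := by
        have h2 : (1 + w) - (1 - w) = (2 : ℂ) • w := by module
        rw [h2, smul_mul_assoc, smul_smul, mul_comm Complex.I 2]
  rw [hzsub, Matrix.mul_assoc,
    Matrix.mul_nonsing_inv _ ((Matrix.isUnit_iff_isUnit_det _).1 hUz), Matrix.mul_one]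

theorem cayley_bijOn :
    Set.BijOn (fun z : Matrix (Fin 2) (Fin 2) ℂ =>
      (z - Complex.I • (1 : Matrix (Fin 2) (Fin 2) ℂ)) *
        (z + Complex.I • (1 : Matrix (Fin 2) (Fin 2) ℂ))⁻¹)
      SiegelH2 GenBall := by
  refine ⟨fun z hz => cayley_mem z hz.1 hz.2, cayley_inj, fun w hw => ?_⟩
  obtain ⟨z, hz, hzeq⟩ := cayley_surj hw
  exact ⟨z, hz, hzeq⟩
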